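/- Fix integers n ≥ 1 and l ≥ 1, and for k ∈ ℤ let i_k be the unique element of {0,1,…,n} with i_k ≡ −k (mod n+1). There exists a constant C (depending only on n and l) such that for every M ≥ C the following holds: if R : B_M ⊗ B_l → B_l ⊗ B_M is a bijection satisfying R ∘ ẽ_i = ẽ_i ∘ R and R ∘ f̃_i = f̃_i ∘ R as partial maps for all i ∈ {0,1,…,n}, and if R((0,…,0,M) ⊗ z) = z̃ ⊗ ũ for z ∈ B_l, then t(ũ) = t(z), where t(x_1,…,x_{n+1}) = (x_n, x_{n−1},…,x_1). -/

import Mathlib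

/-- Iterated application of a partial map: `OptIter g m a` is `g^m a`. -/
def OptIter {α : Type} (g : α → Option α) : ℕ → α → Option α
  | 0, a => some a
  | m + 1, a => (g a).bind (OptIter g m)

/-- Apply the partial maps `g 1`, `g 2`, ..., `g m` in this order. -/
def ChainOpt {α : Type} (g : ℕ → α → Option α) (m : ℕ) (a : α) : Option α :=
  (List.range m).foldl (fun acc j => acc.bind (g (j + 1))) (some a)

/-- A set with partial Kashiwara-type operators indexed by `{0, 1, ..., n}`. -/
structure PreCrystal (n : ℕ) where
  carrier : Type
  e : Fin (n + 1) → carrier → Option carrier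
  f : Fin (n + 1) → carrier → Option carrier

namespace PreCrystal

variable {n : ℕ}

/-- `ε_i(b) = max {m ≥ 0 : ẽ_i^m b is defined}`. -/
noncomputable def eps (C : PreCrystal n) (i : Fin (n + 1)) (b : C.carrier) : ℕ :=
  sSup {m | OptIter (C.e i) m b ≠ none}

/-- `φ_i(b) = max {m ≥ 0 : f̃_i^m b is defined}`. -/
noncomputable def phi (C : PreCrystal n) (i : Fin (n + 1)) (b : C.carrier) : ℕ :=
  sSup {m | OptIter (C.f i) m b ≠ none}

/-- `ẽ_i^max b = ẽ_i^{ε_i(b)} b`. -/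
noncomputable def eMax (C : PreCrystal n) (i : Fin (n + 1)) (b : C.carrier) : Option C.carrier :=
  OptIter (C.e i) (C.eps i b) b

/-- The Weyl group operator `S_i`: `f̃_i^{φ_i(b)-ε_i(b)} b` if `φ_i(b) ≥ ε_i(b)`,
and `ẽ_i^{ε_i(b)-φ_i(b)} b` if `φ_i(b) ≤ ε_i(b)`. -/
noncomputable def S (C : PreCrystal n) (i : Fin (n + 1)) (b : C.carrier) : Option C.carrier :=
  if C.eps i b ≤ C.phi i b then OptIter (C.f i) (C.phi i b - C.eps i b) b
  else OptIter (C.e i) (C.eps i b - C.phi i b) b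

/-- The tensor product `C ⊗ D` of two crystals, with the Kashiwara tensor product rule. -/
noncomputable def tensor (C D : PreCrystal n) : PreCrystal n where
  carrier := C.carrier × D.carrier
  e := fun i p =>
    if D.eps i p.2 ≤ C.phi i p.1 then (C.e i p.1).map (fun b => (b, p.2))
    else (D.e i p.2).map (fun b => (p.1, b))
  f := fun i p =>
    if D.eps i p.2 < C.phi i p.1 then (C.f i p.1).map (fun b => (b, p.2))
    else (D.f i p.2).map (fun b => (p.1, b))

end PreCrystal

/-- Kashiwara raising operator `ẽ_i` of type `A_n^{(1)}` on `(n+1)`-tuples of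
nonnegative integers (zero-indexed: coordinate `j` is `x_{j+1}`): defined iff the
coordinate at index `i` is positive, it adds 1 at index `i-1` (cyclically) and
subtracts 1 at index `i`. -/
def eA (n : ℕ) (i : Fin (n + 1)) (x : Fin (n + 1) → ℕ) : Option (Fin (n + 1) → ℕ) :=
  if 0 < x i then
    some (Function.update (Function.update x (i - 1) (x (i - 1) + 1)) i (x i - 1))
  else none

/-- Kashiwara lowering operator `f̃_i` of type `A_n^{(1)}`: defined iff the coordinate
at index `i-1` is positive, it subtracts 1 at index `i-1` and adds 1 at index `i`. -/
def fA (n : ℕ) (i : Fin (n + 1)) (x : Fin (n + 1) → ℕ) : Option (Fin (n + 1) → ℕ) :=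
  if 0 < x (i - 1) then
    some (Function.update (Function.update x i (x i + 1)) (i - 1) (x (i - 1) - 1))
  else none

/-- The crystal operators of type `A_n^{(1)}` on all `(n+1)`-tuples; the crystal `B_l`
is the subset of tuples with coordinate sum `l`. -/
def BA (n : ℕ) : PreCrystal n where
  carrier := Fin (n + 1) → ℕ
  e := eA n
  f := fA n

/-- The unique element of `{0, ..., n}` congruent to `-k` modulo `n+1`. -/
def negIdx (n : ℕ) (k : ℤ) : Fin (n + 1) :=
  ⟨((-k) % ((n : ℤ) + 1)).toNat, by
    have h1 := Int.emod_nonneg (-k) (by omega : ((n : ℤ) + 1) ≠ 0)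
    have h2 := Int.emod_lt_of_pos (-k) (by omega : (0 : ℤ) < (n : ℤ) + 1)
    omega⟩

/-- The cyclic shift `σ : (x_1, ..., x_{n+1}) ↦ (x_2, ..., x_{n+1}, x_1)`. -/
def shiftA (n : ℕ) (x : Fin (n + 1) → ℕ) : Fin (n + 1) → ℕ := fun j => x (j + 1)

/-- The map `t(x_1, ..., x_{n+1}) = (x_n, x_{n-1}, ..., x_1)`. -/
def tA (n : ℕ) (x : Fin (n + 1) → ℕ) : Fin n → ℕ :=
  fun k => x ⟨n - 1 - (k : ℕ), by omega⟩

/-- The `(N+1)`-fold tensor power `B ⊗ ... ⊗ B`, associated to the left. -/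
noncomputable def BPow (n : ℕ) : ℕ → PreCrystal n
  | 0 => BA n
  | N + 1 => (BPow n N).tensor (BA n)

/-- The element `b_1 ⊗ ... ⊗ b_{N+1}` of the `(N+1)`-fold tensor power. -/
noncomputable def tensorOf (n : ℕ) : (N : ℕ) → (Fin (N + 1) → (Fin (n + 1) → ℕ)) → (BPow n N).carrier
  | 0, b => b 0
  | N + 1, b => (tensorOf n N (fun j => b j.castSucc), b (Fin.last (N + 1)))

/-- Membership in `B_{l_1} ⊗ ... ⊗ B_{l_{N+1}}`: each factor has coordinate sum `l_j`. -/
def memBPow (n : ℕ) : (N : ℕ) → (Fin (N + 1) → ℕ) → (BPow n N).carrier → Prop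
  | 0, l, x => ∑ j, x j = l 0
  | N + 1, l, p => memBPow n N (fun j => l j.castSucc) p.1 ∧ ∑ j, p.2 j = l (Fin.last (N + 1))

/-- The componentwise cyclic shift `σ_B = σ ⊗ ... ⊗ σ` on a tensor power. -/
noncomputable def shiftPow (n : ℕ) : (N : ℕ) → (BPow n N).carrier → (BPow n N).carrier
  | 0, x => shiftA n x
  | N + 1, p => (shiftPow n N p.1, shiftA n p.2)
section Aux
open Finset
variable {n : ℕ}

def shiftv (x : Fin (n+1) → ℕ) (a b : Fin (n+1)) : Fin (n+1) → ℕ :=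
  Function.update (Function.update x b (x b + 1)) a (x a - 1)

lemma shiftv_src (x : Fin (n+1) → ℕ) (a b : Fin (n+1)) : shiftv x a b a = x a - 1 := by
  simp [shiftv]

lemma shiftv_tgt (x : Fin (n+1) → ℕ) {a b : Fin (n+1)} (h : a ≠ b) : shiftv x a b b = x b + 1 := by
  simp [shiftv, Function.update_of_ne h.symm]

lemma shiftv_other (x : Fin (n+1) → ℕ) {a b j : Fin (n+1)} (hja : j ≠ a) (hjb : j ≠ b) :
    shiftv x a b j = x j := by
  simp [shiftv, Function.update_of_ne hja, Function.update_of_ne hjb]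

lemma sub_one_ne (hn : 1 ≤ n) (i : Fin (n+1)) : i - 1 ≠ i := by
  intro h
  have h1 : i = i + 1 := by
    have := sub_eq_iff_eq_add.mp h
    exact this
  have h2 : (1 : Fin (n+1)) = 0 := (left_eq_add.mp h1)
  have := Fin.one_eq_zero_iff.mp h2
  omega

lemma eA_eq (i : Fin (n+1)) (x : Fin (n+1) → ℕ) :
    eA n i x = if 0 < x i then some (shiftv x i (i-1)) else none := rfl

lemma fA_eq (i : Fin (n+1)) (x : Fin (n+1) → ℕ) :
    fA n i x = if 0 < x (i-1) then some (shiftv x (i-1) i) else none := rfl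

lemma sum_shiftv (g x : Fin (n+1) → ℕ) {a b : Fin (n+1)} (hab : a ≠ b) (hx : 0 < x a) :
    (∑ j, g j * shiftv x a b j) + g a = (∑ j, g j * x j) + g b := by
  classical
  have hmem : b ∈ Finset.univ.erase a := Finset.mem_erase.mpr ⟨hab.symm, Finset.mem_univ b⟩
  have e1 : ∀ y : Fin (n+1) → ℕ, (∑ j, g j * y j)
      = g a * y a + (g b * y b + ∑ j ∈ (Finset.univ.erase a).erase b, g j * y j) := by
    intro y
    rw [← Finset.add_sum_erase _ (fun j => g j * y j) (Finset.mem_univ a), ← Finset.add_sum_erase _ (fun j => g j * y j) hmem]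
  have e2 : ∑ j ∈ (Finset.univ.erase a).erase b, g j * shiftv x a b j
      = ∑ j ∈ (Finset.univ.erase a).erase b, g j * x j := by
    apply Finset.sum_congr rfl
    intro j hj
    have hjb : j ≠ b := (Finset.mem_erase.mp hj).1
    have hja : j ≠ a := (Finset.mem_erase.mp (Finset.mem_erase.mp hj).2).1
    rw [shiftv_other x hja hjb]
  rw [e1, e1, e2, shiftv_src, shiftv_tgt x hab]
  have hs : x a - 1 + 1 = x a := Nat.succ_pred_eq_of_pos hx
  set S := ∑ j ∈ (Finset.univ.erase a).erase b, g j * x j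
  set t := x a - 1
  rw [show x a = t + 1 from hs.symm]
  ring

end Aux

section Aux2
variable {n : ℕ}

lemma optIter_eA (hn : 1 ≤ n) (i : Fin (n+1)) :
    ∀ (m : ℕ) (x : Fin (n+1) → ℕ), OptIter (eA n i) m x ≠ none ↔ m ≤ x i
  | 0, x => by simp [OptIter]
  | m+1, x => by
    rw [OptIter, eA_eq]
    by_cases h : 0 < x i
    · rw [if_pos h, Option.bind_some, optIter_eA hn i m _,
        shiftv_src x i (i-1)]
      omega
    · rw [if_neg h]
      simp only [Option.bind_none, ne_eq, not_true_eq_false, false_iff]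
      omega

lemma optIter_fA (hn : 1 ≤ n) (i : Fin (n+1)) :
    ∀ (m : ℕ) (x : Fin (n+1) → ℕ), OptIter (fA n i) m x ≠ none ↔ m ≤ x (i-1)
  | 0, x => by simp [OptIter]
  | m+1, x => by
    rw [OptIter, fA_eq]
    by_cases h : 0 < x (i-1)
    · rw [if_pos h, Option.bind_some, optIter_fA hn i m _,
        shiftv_src x (i-1) i]
      omega
    · rw [if_neg h]
      simp only [Option.bind_none, ne_eq, not_true_eq_false, false_iff]
      omega

lemma epsBA (hn : 1 ≤ n) (i : Fin (n+1)) (x : Fin (n+1) → ℕ) :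
    (BA n).eps i x = x i := by
  have hset : {m | OptIter ((BA n).e i) m x ≠ none} = Set.Iic (x i) :=
    Set.ext fun m => by exact optIter_eA hn i m x
  exact (congrArg sSup hset).trans csSup_Iic

lemma phiBA (hn : 1 ≤ n) (i : Fin (n+1)) (x : Fin (n+1) → ℕ) :
    (BA n).phi i x = x (i-1) := by
  have hset : {m | OptIter ((BA n).f i) m x ≠ none} = Set.Iic (x (i-1)) :=
    Set.ext fun m => by exact optIter_fA hn i m x
  exact (congrArg sSup hset).trans csSup_Iic

lemma tensorE (hn : 1 ≤ n) (i : Fin (n+1)) (x y : Fin (n+1) → ℕ) :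
    ((BA n).tensor (BA n)).e i (x, y) =
      if y i ≤ x (i-1) then (eA n i x).map (fun b => (b, y))
      else (eA n i y).map (fun b => (x, b)) := by
  show (if (BA n).eps i y ≤ (BA n).phi i x then _ else _) = _
  rw [epsBA hn, phiBA hn]
  rfl

lemma tensorF (hn : 1 ≤ n) (i : Fin (n+1)) (x y : Fin (n+1) → ℕ) :
    ((BA n).tensor (BA n)).f i (x, y) =
      if y i < x (i-1) then (fA n i x).map (fun b => (b, y))
      else (fA n i y).map (fun b => (x, b)) := by
  show (if (BA n).eps i y < (BA n).phi i x then _ else _) = _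
  rw [epsBA hn, phiBA hn]
  rfl

lemma optIter_tensorE (hn : 1 ≤ n) (i : Fin (n+1)) :
    ∀ (m : ℕ) (x y : Fin (n+1) → ℕ),
      OptIter (((BA n).tensor (BA n)).e i) m (x, y) ≠ none ↔ m ≤ x i + (y i - x (i-1))
  | 0, x, y => by simp [OptIter]
  | m+1, x, y => by
    have hne : i - 1 ≠ i := sub_one_ne hn i
    erw [OptIter, tensorE hn, eA_eq, eA_eq]
    by_cases h1 : y i ≤ x (i-1)
    · rw [if_pos h1]
      by_cases h2 : 0 < x i
      · erw [if_pos h2, Option.map_some, Option.bind_some,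
          optIter_tensorE hn i m _ y, shiftv_src x i (i-1),
          shiftv_tgt x hne.symm]
        omega
      · rw [if_neg h2]
        exact iff_of_false (fun h => h rfl) (by omega)
    · rw [if_neg h1]
      have h2 : 0 < y i := by omega
      erw [if_pos h2, Option.map_some, Option.bind_some,
        optIter_tensorE hn i m x _, shiftv_src y i (i-1)]
      omega

lemma optIter_tensorF (hn : 1 ≤ n) (i : Fin (n+1)) :
    ∀ (m : ℕ) (x y : Fin (n+1) → ℕ),
      OptIter (((BA n).tensor (BA n)).f i) m (x, y) ≠ none ↔ m ≤ y (i-1) + (x (i-1) - y i)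
  | 0, x, y => by simp [OptIter]
  | m+1, x, y => by
    have hne : i - 1 ≠ i := sub_one_ne hn i
    erw [OptIter, tensorF hn, fA_eq, fA_eq]
    by_cases h1 : y i < x (i-1)
    · have h2 : 0 < x (i-1) := by omega
      erw [if_pos h1, if_pos h2, Option.map_some, Option.bind_some,
        optIter_tensorF hn i m _ y, shiftv_src x (i-1) i]
      omega
    · rw [if_neg h1]
      by_cases h2 : 0 < y (i-1)
      · erw [if_pos h2, Option.map_some, Option.bind_some,
          optIter_tensorF hn i m x _, shiftv_src y (i-1) i,
          shiftv_tgt y hne]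
        omega
      · rw [if_neg h2]
        exact iff_of_false (fun h => h rfl) (by omega)

lemma epsT (hn : 1 ≤ n) (i : Fin (n+1)) (x y : Fin (n+1) → ℕ) :
    ((BA n).tensor (BA n)).eps i (x, y) = x i + (y i - x (i-1)) := by
  have hset : {m | OptIter (((BA n).tensor (BA n)).e i) m (x, y) ≠ none}
      = Set.Iic (x i + (y i - x (i-1))) :=
    Set.ext fun m => by simpa using optIter_tensorE hn i m x y
  exact (congrArg sSup hset).trans csSup_Iic

lemma phiT (hn : 1 ≤ n) (i : Fin (n+1)) (x y : Fin (n+1) → ℕ) :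
    ((BA n).tensor (BA n)).phi i (x, y) = y (i-1) + (x (i-1) - y i) := by
  have hset : {m | OptIter (((BA n).tensor (BA n)).f i) m (x, y) ≠ none}
      = Set.Iic (y (i-1) + (x (i-1) - y i)) :=
    Set.ext fun m => by simpa using optIter_tensorF hn i m x y
  exact (congrArg sSup hset).trans csSup_Iic

end Aux2

section Aux3
open Finset
variable {n : ℕ}

def deltaF (n c : ℕ) : Fin (n+1) → ℕ := fun j => if (j:ℕ) = n then c else 0

def vzF (n l M : ℕ) (z : Fin (n+1) → ℕ) : Fin (n+1) → ℕ :=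
  fun j => if (j:ℕ) = n then M - l + z j else z j

lemma sum_deltaF (c : ℕ) : ∑ j, deltaF n c j = c := by
  rw [Finset.sum_eq_single (Fin.last n)]
  · simp [deltaF]
  · intro b _ hb
    have hbn : (b:ℕ) ≠ n := fun h => hb (Fin.ext (by simpa using h))
    simp [deltaF, hbn]
  · simp

lemma coord_le_sum (x : Fin (n+1) → ℕ) (j : Fin (n+1)) : x j ≤ ∑ j', x j' :=
  Finset.single_le_sum (fun _ _ => Nat.zero_le _) (Finset.mem_univ j)

lemma eq_deltaF {x : Fin (n+1) → ℕ} {c : ℕ} (hs : ∑ j, x j = c)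
    (h0 : ∀ j : Fin (n+1), (j:ℕ) ≠ n → x j = 0) : x = deltaF n c := by
  have hlast : x (Fin.last n) = c := by
    rw [← hs, Finset.sum_eq_single (Fin.last n)]
    · intro b _ hb
      exact h0 b (fun h => hb (Fin.ext (by simpa using h)))
    · simp
  funext j
  by_cases hj : (j:ℕ) = n
  · have hje : j = Fin.last n := Fin.ext (by simpa using hj)
    rw [hje, hlast]
    simp [deltaF]
  · rw [h0 j hj]
    simp [deltaF, hj]

lemma sum_eA_eq (hn : 1 ≤ n) {i : Fin (n+1)} {x x' : Fin (n+1) → ℕ}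
    (h : eA n i x = some x') : ∑ j, x' j = ∑ j, x j := by
  rw [eA_eq] at h
  by_cases hx : 0 < x i
  · rw [if_pos hx, Option.some_inj] at h
    have hs := sum_shiftv (fun _ => 1) x (sub_one_ne hn i).symm hx
    simp only [one_mul] at hs
    rw [h] at hs
    omega
  · rw [if_neg hx] at h; exact absurd h (by simp)

lemma sum_fA_eq (hn : 1 ≤ n) {i : Fin (n+1)} {x x' : Fin (n+1) → ℕ}
    (h : fA n i x = some x') : ∑ j, x' j = ∑ j, x j := by
  rw [fA_eq] at h
  by_cases hx : 0 < x (i-1)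
  · rw [if_pos hx, Option.some_inj] at h
    have hs := sum_shiftv (fun _ => 1) x (sub_one_ne hn i) hx
    simp only [one_mul] at hs
    rw [h] at hs
    omega
  · rw [if_neg hx] at h; exact absurd h (by simp)

lemma tensor_e_sums (hn : 1 ≤ n) {i : Fin (n+1)}
    {p q : (Fin (n+1) → ℕ) × (Fin (n+1) → ℕ)}
    (h : ((BA n).tensor (BA n)).e i p = some q) :
    (∑ j, q.1 j = ∑ j, p.1 j) ∧ (∑ j, q.2 j = ∑ j, p.2 j) := by
  obtain ⟨x, y⟩ := p
  erw [tensorE hn] at h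
  split_ifs at h
  · rcases hx : eA n i x with _ | x' <;> rw [hx] at h
    · exact absurd h (by simp)
    · simp only [Option.map_some, Option.some_inj] at h
      rw [← Option.some_inj.mp h]
      exact ⟨sum_eA_eq hn hx, rfl⟩
  · rcases hy : eA n i y with _ | y' <;> rw [hy] at h
    · exact absurd h (by simp)
    · simp only [Option.map_some, Option.some_inj] at h
      rw [← Option.some_inj.mp h]
      exact ⟨rfl, sum_eA_eq hn hy⟩

lemma tensor_f_sums (hn : 1 ≤ n) {i : Fin (n+1)}
    {p q : (Fin (n+1) → ℕ) × (Fin (n+1) → ℕ)}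
    (h : ((BA n).tensor (BA n)).f i p = some q) :
    (∑ j, q.1 j = ∑ j, p.1 j) ∧ (∑ j, q.2 j = ∑ j, p.2 j) := by
  obtain ⟨x, y⟩ := p
  erw [tensorF hn] at h
  split_ifs at h
  · rcases hx : fA n i x with _ | x' <;> rw [hx] at h
    · exact absurd h (by simp)
    · simp only [Option.map_some, Option.some_inj] at h
      rw [← Option.some_inj.mp h]
      exact ⟨sum_fA_eq hn hx, rfl⟩
  · rcases hy : fA n i y with _ | y' <;> rw [hy] at h
    · exact absurd h (by simp)
    · simp only [Option.map_some, Option.some_inj] at h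
      rw [← Option.some_inj.mp h]
      exact ⟨rfl, sum_fA_eq hn hy⟩

end Aux3

section Main
variable {n l M : ℕ}
  {R : ((Fin (n + 1) → ℕ) × (Fin (n + 1) → ℕ)) → ((Fin (n + 1) → ℕ) × (Fin (n + 1) → ℕ))}

lemma iterE_comm (hn : 1 ≤ n)
    (hcomm : ∀ i : Fin (n + 1), ∀ p : (Fin (n + 1) → ℕ) × (Fin (n + 1) → ℕ),
      (∑ j, p.1 j = M) → (∑ j, p.2 j = l) →
      Option.map R (((BA n).tensor (BA n)).e i p) = ((BA n).tensor (BA n)).e i (R p) ∧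
      Option.map R (((BA n).tensor (BA n)).f i p) = ((BA n).tensor (BA n)).f i (R p))
    (i : Fin (n+1)) (m : ℕ) :
    ∀ p, (∑ j, p.1 j = M) → (∑ j, p.2 j = l) →
      Option.map R (OptIter (((BA n).tensor (BA n)).e i) m p)
        = OptIter (((BA n).tensor (BA n)).e i) m (R p) := by
  induction m with
  | zero => intro p h1 h2; simp [OptIter]; rfl
  | succ m ih =>
    intro p h1 h2
    erw [OptIter, OptIter]
    rcases hq : ((BA n).tensor (BA n)).e i p with _ | q
    · have hc := (hcomm i p h1 h2).1
      rw [hq] at hc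
      change none = _ at hc
      rw [← hc]
      rfl
    · have hc := (hcomm i p h1 h2).1
      rw [hq] at hc
      change some (R q) = _ at hc
      erw [← hc, Option.bind_some, Option.bind_some]
      have hs := tensor_e_sums hn hq
      exact ih q (hs.1.trans h1) (hs.2.trans h2)

lemma iterF_comm (hn : 1 ≤ n)
    (hcomm : ∀ i : Fin (n + 1), ∀ p : (Fin (n + 1) → ℕ) × (Fin (n + 1) → ℕ),
      (∑ j, p.1 j = M) → (∑ j, p.2 j = l) →
      Option.map R (((BA n).tensor (BA n)).e i p) = ((BA n).tensor (BA n)).e i (R p) ∧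
      Option.map R (((BA n).tensor (BA n)).f i p) = ((BA n).tensor (BA n)).f i (R p))
    (i : Fin (n+1)) (m : ℕ) :
    ∀ p, (∑ j, p.1 j = M) → (∑ j, p.2 j = l) →
      Option.map R (OptIter (((BA n).tensor (BA n)).f i) m p)
        = OptIter (((BA n).tensor (BA n)).f i) m (R p) := by
  induction m with
  | zero => intro p h1 h2; simp [OptIter]; rfl
  | succ m ih =>
    intro p h1 h2
    erw [OptIter, OptIter]
    rcases hq : ((BA n).tensor (BA n)).f i p with _ | q
    · have hc := (hcomm i p h1 h2).2
      rw [hq] at hc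
      change none = _ at hc
      rw [← hc]
      rfl
    · have hc := (hcomm i p h1 h2).2
      rw [hq] at hc
      change some (R q) = _ at hc
      erw [← hc, Option.bind_some, Option.bind_some]
      have hs := tensor_f_sums hn hq
      exact ih q (hs.1.trans h1) (hs.2.trans h2)

lemma eps_pres (hn : 1 ≤ n)
    (hcomm : ∀ i : Fin (n + 1), ∀ p : (Fin (n + 1) → ℕ) × (Fin (n + 1) → ℕ),
      (∑ j, p.1 j = M) → (∑ j, p.2 j = l) →
      Option.map R (((BA n).tensor (BA n)).e i p) = ((BA n).tensor (BA n)).e i (R p) ∧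
      Option.map R (((BA n).tensor (BA n)).f i p) = ((BA n).tensor (BA n)).f i (R p))
    (i : Fin (n+1)) (p : (Fin (n + 1) → ℕ) × (Fin (n + 1) → ℕ))
    (h1 : ∑ j, p.1 j = M) (h2 : ∑ j, p.2 j = l) :
    ((BA n).tensor (BA n)).eps i p = ((BA n).tensor (BA n)).eps i (R p) := by
  unfold PreCrystal.eps
  congr 1
  ext m
  simp only [Set.mem_setOf_eq]
  rw [← iterE_comm hn hcomm i m p h1 h2]
  exact not_congr Option.map_eq_none_iff.symm

lemma phi_pres (hn : 1 ≤ n)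
    (hcomm : ∀ i : Fin (n + 1), ∀ p : (Fin (n + 1) → ℕ) × (Fin (n + 1) → ℕ),
      (∑ j, p.1 j = M) → (∑ j, p.2 j = l) →
      Option.map R (((BA n).tensor (BA n)).e i p) = ((BA n).tensor (BA n)).e i (R p) ∧
      Option.map R (((BA n).tensor (BA n)).f i p) = ((BA n).tensor (BA n)).f i (R p))
    (i : Fin (n+1)) (p : (Fin (n + 1) → ℕ) × (Fin (n + 1) → ℕ))
    (h1 : ∑ j, p.1 j = M) (h2 : ∑ j, p.2 j = l) :
    ((BA n).tensor (BA n)).phi i p = ((BA n).tensor (BA n)).phi i (R p) := by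
  unfold PreCrystal.phi
  congr 1
  ext m
  simp only [Set.mem_setOf_eq]
  rw [← iterF_comm hn hcomm i m p h1 h2]
  exact not_congr Option.map_eq_none_iff.symm

end Main

section Key
variable {n l M : ℕ}
  {R : ((Fin (n + 1) → ℕ) × (Fin (n + 1) → ℕ)) → ((Fin (n + 1) → ℕ) × (Fin (n + 1) → ℕ))}

lemma keyR (hn : 1 ≤ n) (hl : 1 ≤ l) (hM : 2 * l + 1 ≤ M)
    (hbij : Set.BijOn R {p | (∑ j, p.1 j = M) ∧ (∑ j, p.2 j = l)}
      {p | (∑ j, p.1 j = l) ∧ (∑ j, p.2 j = M)})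
    (hcomm : ∀ i : Fin (n + 1), ∀ p : (Fin (n + 1) → ℕ) × (Fin (n + 1) → ℕ),
      (∑ j, p.1 j = M) → (∑ j, p.2 j = l) →
      Option.map R (((BA n).tensor (BA n)).e i p) = ((BA n).tensor (BA n)).e i (R p) ∧
      Option.map R (((BA n).tensor (BA n)).f i p) = ((BA n).tensor (BA n)).f i (R p)) :
    ∀ D : ℕ, ∀ z : Fin (n+1) → ℕ, (∑ j, z j = l) →
      (∑ j : Fin (n+1), ((n : ℕ) - (j : ℕ)) * z j = D) →
      R (deltaF n M, z) = (deltaF n l, vzF n l M z) := by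
  intro D
  induction D using Nat.strong_induction_on with
  | _ D ih =>
  intro z hz hD
  by_cases hbase : ∀ j : Fin (n+1), (j:ℕ) ≠ n → z j = 0
  · -- base case : z = deltaF n l
    have hzdl : z = deltaF n l := eq_deltaF hz hbase
    subst hzdl
    have hvz : vzF n l M (deltaF n l) = deltaF n M := by
      funext j
      by_cases hj : (j:ℕ) = n
      · simp only [vzF, deltaF, if_pos hj]
        omega
      · simp only [vzF, deltaF, if_neg hj]
    rw [hvz]
    rcases hR : R (deltaF n M, deltaF n l) with ⟨w, v⟩
    have hcod := hbij.mapsTo (show (deltaF n M, deltaF n l) ∈ _ from ⟨sum_deltaF M, sum_deltaF l⟩)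
    rw [hR] at hcod
    obtain ⟨hwsum', hvsum'⟩ := hcod
    have hwsum : ∑ j', w j' = l := hwsum'
    have hvsum : ∑ j', v j' = M := hvsum'
    have heq : ∀ i : Fin (n+1),
        deltaF n M i + (deltaF n l i - deltaF n M (i-1)) = w i + (v i - w (i-1)) := by
      intro i
      have h := eps_pres hn hcomm i (deltaF n M, deltaF n l) (sum_deltaF M) (sum_deltaF l)
      erw [hR, epsT hn, epsT hn] at h
      exact h
    have hph : ∀ i : Fin (n+1),
        deltaF n l (i-1) + (deltaF n M (i-1) - deltaF n l i) = v (i-1) + (w (i-1) - v i) := by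
      intro i
      have h := phi_pres hn hcomm i (deltaF n M, deltaF n l) (sum_deltaF M) (sum_deltaF l)
      erw [hR, phiT hn, phiT hn] at h
      exact h
    have hw0 : ∀ j : Fin (n+1), (j:ℕ) ≠ n → w j = 0 := by
      intro j hj
      have h := heq j
      rw [show deltaF n M j = 0 from by simp [deltaF, hj],
        show deltaF n l j = 0 from by simp [deltaF, hj]] at h
      omega
    have hv0 : ∀ j : Fin (n+1), (j:ℕ) ≠ n → v j = 0 := by
      intro j hj
      have hi1 : (j + 1 : Fin (n+1)) - 1 = j := by rw [sub_eq_iff_eq_add]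
      have h := hph (j+1)
      rw [hi1, show deltaF n M j = 0 from by simp [deltaF, hj],
        show deltaF n l j = 0 from by simp [deltaF, hj]] at h
      omega
    rw [eq_deltaF hwsum hw0, eq_deltaF hvsum hv0]
  · -- inductive step
    push_neg at hbase
    obtain ⟨j, hj, hjz⟩ := hbase
    have hjlt : (j:ℕ) < n := by have := j.isLt; omega
    have hjz' : 0 < z j := Nat.pos_of_ne_zero hjz
    have hlt : j < Fin.last n := by rw [Fin.lt_def, Fin.val_last]; exact hjlt
    have hival : ((j + 1 : Fin (n+1)) : ℕ) = (j:ℕ) + 1 := Fin.val_add_one_of_lt hlt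
    set i : Fin (n+1) := j + 1 with hidef
    have hi1 : i - 1 = j := by rw [hidef, sub_eq_iff_eq_add]
    have hji : j ≠ i := by rw [← hi1]; exact sub_one_ne hn i
    have hu0j : deltaF n M j = 0 := by simp [deltaF, hj]
    have hstep : ((BA n).tensor (BA n)).f i (deltaF n M, z) = some (deltaF n M, shiftv z j i) := by
      rw [tensorF hn, hi1, hu0j, if_neg (by omega), fA_eq, hi1, if_pos hjz']
      rfl
    have hz'sum : ∑ j', shiftv z j i j' = l := by
      have hs := sum_shiftv (fun _ => 1) z hji hjz'
      simp only [one_mul] at hs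
      omega
    have hwt : (∑ j' : Fin (n+1), ((n:ℕ) - (j':ℕ)) * shiftv z j i j' = D - 1) ∧ 1 ≤ D := by
      have hs := sum_shiftv (fun j'' => (n:ℕ) - (j'':ℕ)) z hji hjz'
      rw [hival] at hs
      constructor <;> omega
    have hIH := ih (D-1) (by omega) (shiftv z j i) hz'sum hwt.1
    have hcm := (hcomm i (deltaF n M, z) (sum_deltaF M) hz).2
    erw [hstep] at hcm
    simp only [Option.map_some] at hcm
    rw [hIH] at hcm
    rcases hR : R (deltaF n M, z) with ⟨w, v⟩
    rw [hR] at hcm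
    have hcod := hbij.mapsTo (show (deltaF n M, z) ∈ _ from ⟨sum_deltaF M, hz⟩)
    rw [hR] at hcod
    have hwsum : ∑ j', w j' = l := hcod.1
    have hvsum : ∑ j', v j' = M := hcod.2
    erw [tensorF hn, hi1] at hcm
    split_ifs at hcm with hcond
    · -- f acted on the left factor : impossible
      exfalso
      rw [fA_eq, hi1] at hcm
      by_cases hw0 : 0 < w j
      · rw [if_pos hw0] at hcm
        simp only [Option.map_some, Option.some_inj, Prod.mk.injEq] at hcm
        obtain ⟨hc1, hc2⟩ := hcm
        have hwi : w i + 1 = deltaF n l i := by rw [hc1, shiftv_tgt w hji]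
        by_cases hin : (i:ℕ) = n
        · have hvi : v i = M - l + shiftv z j i i := by
            rw [← hc2]; simp only [vzF, if_pos hin]
          have hdli : deltaF n l i = l := by simp [deltaF, hin]
          have hwle : w j ≤ l := by
            have := coord_le_sum w j
            omega
          omega
        · have hdli : deltaF n l i = 0 := by simp [deltaF, hin]
          omega
      · rw [if_neg hw0] at hcm
        simp at hcm
    · -- f acted on the right factor
      rw [fA_eq, hi1] at hcm
      by_cases hv0 : 0 < v j
      · rw [if_pos hv0] at hcm
        simp only [Option.map_some, Option.some_inj, Prod.mk.injEq] at hcm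
        obtain ⟨hc1, hc2⟩ := hcm
        have hveq : v = vzF n l M z := by
          funext j'
          by_cases hj'1 : j' = j
          · rw [hj'1]
            have h1 := congrFun hc2 j
            rw [shiftv_src] at h1
            have h2 : shiftv z j i j = z j - 1 := shiftv_src z j i
            simp only [vzF, if_neg hj] at h1 ⊢
            omega
          · by_cases hj'2 : j' = i
            · rw [hj'2]
              have h1 := congrFun hc2 i
              rw [shiftv_tgt v hji] at h1
              have h2 : shiftv z j i i = z i + 1 := shiftv_tgt z hji
              by_cases hin : (i:ℕ) = n
              · simp only [vzF, if_pos hin] at h1 ⊢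
                omega
              · simp only [vzF, if_neg hin] at h1 ⊢
                omega
            · have h1 := congrFun hc2 j'
              rw [shiftv_other v hj'1 hj'2] at h1
              have h2 : shiftv z j i j' = z j' := shiftv_other z hj'1 hj'2
              by_cases hin : (j':ℕ) = n
              · simp only [vzF, if_pos hin] at h1 ⊢
                omega
              · simp only [vzF, if_neg hin] at h1 ⊢
                omega
        rw [hveq, hc1]
      · rw [if_neg hv0] at hcm
        simp at hcm

end Key


/-- Lemma 3.4 for type `A_n^{(1)}`: there is a constant `C` such that for every
`M ≥ C` and every combinatorial `R` matrix (a bijection `B_M ⊗ B_l → B_l ⊗ B_M`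
commuting with all `ẽ_i` and `f̃_i` as partial maps), writing
`R(δ_M[a_0] ⊗ z) = z̃ ⊗ ũ` with `δ_M[a_0] = (0, …, 0, M)`, one has `t(ũ) = t(z)`,
where `t(x_1,…,x_{n+1}) = (x_n, …, x_1)`. -/
theorem stmt13 (n l : ℕ) (hn : 1 ≤ n) (hl : 1 ≤ l) :
    ∃ Cst : ℕ, ∀ M : ℕ, Cst ≤ M →
      ∀ R : ((Fin (n + 1) → ℕ) × (Fin (n + 1) → ℕ))
            → ((Fin (n + 1) → ℕ) × (Fin (n + 1) → ℕ)),
        Set.BijOn R {p | (∑ j, p.1 j = M) ∧ (∑ j, p.2 j = l)}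
          {p | (∑ j, p.1 j = l) ∧ (∑ j, p.2 j = M)} →
        (∀ i : Fin (n + 1), ∀ p : (Fin (n + 1) → ℕ) × (Fin (n + 1) → ℕ),
          (∑ j, p.1 j = M) → (∑ j, p.2 j = l) →
          Option.map R (((BA n).tensor (BA n)).e i p)
              = ((BA n).tensor (BA n)).e i (R p) ∧
          Option.map R (((BA n).tensor (BA n)).f i p)
              = ((BA n).tensor (BA n)).f i (R p)) →
        ∀ z : Fin (n + 1) → ℕ, ∑ j, z j = l →
          tA n (R ((fun j => if (j : ℕ) = n then M else 0), z)).2 = tA n z := by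
  
  refine ⟨2 * l + 1, ?_⟩
  intro M hM R hbij hcomm z hz
  have hkey := keyR hn hl hM hbij hcomm (∑ j : Fin (n+1), ((n:ℕ) - (j:ℕ)) * z j) z hz rfl
  have hu : (fun j : Fin (n+1) => if (j : ℕ) = n then M else 0) = deltaF n M := rfl
  rw [hu, hkey]
  funext k
  simp only [tA, vzF]
  split
  · next h =>
    exfalso
    have h' : n - 1 - (k:ℕ) = n := h
    omega
  · rfl
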